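/- Let (B, L, θ) be a Boolean dynamical system and (α, A) a cycle with no exits. Then there exist 1 ≤ j ≤ |α| and a non-empty B ⊆ A such that, with β = α₁⋯α_j, the pair (β, B) is a cycle with no exits and B ∩ θ_{β₁⋯β_k}(B) = ∅ for all 1 ≤ k < j. -/

import Mathlib

/-- An ideal of a (generalized) Boolean algebra: a non-empty subset closed under
union and under intersection with arbitrary elements. -/
def IsBoolIdeal {B : Type*} [GeneralizedBooleanAlgebra B] (I : Set B) : Prop :=
  I.Nonempty ∧ (∀ a ∈ I, ∀ b ∈ I, a ⊔ b ∈ I) ∧ (∀ a ∈ I, ∀ b : B, a ⊓ b ∈ I)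

/-- A filter in a (generalized) Boolean algebra. -/
def IsBoolFilter {B : Type*} [GeneralizedBooleanAlgebra B] (ξ : Set B) : Prop :=
  ξ.Nonempty ∧ ⊥ ∉ ξ ∧ (∀ a ∈ ξ, ∀ b : B, a ≤ b → b ∈ ξ) ∧ (∀ a ∈ ξ, ∀ b ∈ ξ, a ⊓ b ∈ ξ)

/-- An ultrafilter of a (generalized) Boolean algebra. -/
def IsBoolUltrafilter {B : Type*} [GeneralizedBooleanAlgebra B] (ξ : Set B) : Prop :=
  IsBoolFilter ξ ∧ ∀ a ∈ ξ, ∀ b b' : B, a = b ⊔ b' → b ∈ ξ ∨ b' ∈ ξ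

/-- The relation `A ~ B ⟺ A ∪ A' = B ∪ B'` for some `A', B' ∈ I`. -/
def relI {B : Type*} [GeneralizedBooleanAlgebra B] (I : Set B) (a b : B) : Prop :=
  ∃ a' ∈ I, ∃ b' ∈ I, a ⊔ a' = b ⊔ b'

/-- The action of a finite word `α ∈ L*`: `θ_α = θ_{α_n} ∘ ⋯ ∘ θ_{α_1}`. -/
def wordAct {B L : Type*} (θ : L → B → B) (α : List L) (A : B) : B :=
  α.foldl (fun x a => θ a x) A

/-- `α^k`: the word `α` concatenated with itself `k` times. -/
def wordPow {L : Type*} (α : List L) (k : ℕ) : List L := (List.replicate k α).flatten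

/-- A Boolean dynamical system: a Boolean algebra `B`, a set `L`, and actions
`θ_a` on `B` (Boolean homomorphisms with `θ_a ⊥ = ⊥`) such that each word
action has compact range and closed domain. -/
structure BoolDynSys (B L : Type*) [GeneralizedBooleanAlgebra B] where
  θ : L → B → B
  map_inf : ∀ (a : L) (A A' : B), θ a (A ⊓ A') = θ a A ⊓ θ a A'
  map_sup : ∀ (a : L) (A A' : B), θ a (A ⊔ A') = θ a A ⊔ θ a A'
  map_sdiff : ∀ (a : L) (A A' : B), θ a (A \ A') = θ a A \ θ a A'
  map_bot : ∀ a : L, θ a ⊥ = ⊥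
  compactRange : ∀ α : List L, α ≠ [] → ∃ R : B, IsLUB (Set.range (wordAct θ α)) R
  closedDomain : ∀ α : List L, α ≠ [] → ∀ R : B, IsLUB (Set.range (wordAct θ α)) R →
      ∃ D : B, wordAct θ α D = R

section BDS
variable {B L : Type*} [GeneralizedBooleanAlgebra B]

/-- `Δ_A = {a ∈ L : θ_a(A) ≠ ∅}`. -/
def DeltaSet (S : BoolDynSys B L) (A : B) : Set L := {a : L | S.θ a A ≠ ⊥}

/-- `A` is regular if every non-empty `C ⊆ A` has `0 < |Δ_C| < ∞`. -/
def RegularElt (S : BoolDynSys B L) (A : B) : Prop :=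
  ∀ C : B, C ≤ A → C ≠ ⊥ → (DeltaSet S C).Finite ∧ (DeltaSet S C).Nonempty

/-- An ultrafilter cycle `(α, η)`: `θ_α(A) ∈ η` for all `A ∈ η`. -/
def IsUFCycle (S : BoolDynSys B L) (α : List L) (η : Set B) : Prop :=
  α ≠ [] ∧ IsBoolUltrafilter η ∧ ∀ A ∈ η, wordAct S.θ α A ∈ η

/-- A cycle `(α, A)`: `θ_α(C) = C` for all `C ⊆ A`. -/
def IsCycle (S : BoolDynSys B L) (α : List L) (A : B) : Prop :=
  α ≠ [] ∧ A ≠ ⊥ ∧ ∀ C : B, C ≤ A → wordAct S.θ α C = C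

/-- The cycle `(α, A)` has no exits: for all `t ≤ |α|` and all non-empty
`C ⊆ θ_{α₁⋯α_t}(A)`, `C` is regular with `Δ_C = {α_{t+1}}` (indices mod `|α|`). -/
def NoExits (S : BoolDynSys B L) (α : List L) (A : B) : Prop :=
  ∀ t : ℕ, ∀ _h1 : 1 ≤ t, ∀ h2 : t ≤ α.length, ∀ C : B, C ≠ ⊥ →
    C ≤ wordAct S.θ (α.take t) A →
    RegularElt S C ∧
      DeltaSet S C = {α.get ⟨t % α.length, Nat.mod_lt t (Nat.lt_of_lt_of_le _h1 h2)⟩}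

/-- The cycle `(α, A)` has an exit. -/
def HasExit (S : BoolDynSys B L) (α : List L) (A : B) : Prop :=
  ∃ t : ℕ, ∃ _h1 : 1 ≤ t, ∃ h2 : t ≤ α.length, ∃ C : B, C ≠ ⊥ ∧
    C ≤ wordAct S.θ (α.take t) A ∧
    DeltaSet S C ≠ {α.get ⟨t % α.length, Nat.mod_lt t (Nat.lt_of_lt_of_le _h1 h2)⟩}

/-- Condition (L): every cycle has an exit. -/
def ConditionL (S : BoolDynSys B L) : Prop :=
  ∀ (α : List L) (A : B), IsCycle S α A → HasExit S α A

/-- A hereditary subset: closed under the actions. -/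
def IsHereditary (S : BoolDynSys B L) (H : Set B) : Prop :=
  ∀ A ∈ H, ∀ a : L, S.θ a A ∈ H

/-- A saturated subset: `A ∈ H` whenever `A` is regular and `θ_a(A) ∈ H` for all `a`. -/
def IsSaturated (S : BoolDynSys B L) (H : Set B) : Prop :=
  ∀ A : B, RegularElt S A → (∀ a : L, S.θ a A ∈ H) → A ∈ H

/-- A maximal tail: conditions (T0)–(T5). -/
def IsMaximalTail (S : BoolDynSys B L) (T : Set B) : Prop :=
  T.Nonempty ∧
  (⊥ ∉ T) ∧
  (∀ A : B, ∀ a : L, S.θ a A ∈ T → A ∈ T) ∧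
  (∀ A C : B, A ⊔ C ∈ T → A ∈ T ∨ C ∈ T) ∧
  (∀ A ∈ T, ∀ C : B, A ≤ C → C ∈ T) ∧
  (∀ A ∈ T, RegularElt S A → ∃ a : L, S.θ a A ∈ T) ∧
  (∀ A₁ ∈ T, ∀ A₂ ∈ T, ∃ C ∈ T,
      (∃ α : List L, C ≤ wordAct S.θ α A₁) ∧ (∃ β : List L, C ≤ wordAct S.θ β A₂))

/-- A cyclic maximal tail. -/
def IsCyclicMaximalTail (S : BoolDynSys B L) (T : Set B) : Prop :=
  IsMaximalTail S T ∧
  ∃ (α : List L) (η : Set B) (A : B), IsUFCycle S α η ∧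
    T = {C : B | ∃ β : List L, wordAct S.θ β C ∈ η} ∧ A ∈ η ∧
    ∀ β : List L, β ≠ [] → ∀ C : B, C ≤ A → wordAct S.θ β C ∈ η →
      C ∈ η ∧ ∃ k : ℕ, 0 < k ∧ β = wordPow α k

/-- Condition (K). -/
def ConditionK (S : BoolDynSys B L) : Prop :=
  ¬ ∃ (α : List L) (η : Set B) (A : B), IsUFCycle S α η ∧ A ∈ η ∧
    ∀ β : List L, β ≠ [] → ∀ C : B, C ≤ A → wordAct S.θ β C ∈ η →
      C ∈ η ∧ ∃ k : ℕ, 0 < k ∧ β = wordPow α k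

/-! Notions for the quotient Boolean dynamical system `(B/H, L, θ)` (for a
hereditary saturated ideal `H`), expressed in terms of representatives in `B`. -/

/-- `[C] ⊆ [B']` in `B/H`. -/
def qle (H : Set B) (C A : B) : Prop := ∃ W ∈ H, C ≤ A ⊔ W

/-- `Δ_{[C]}` in `B/H`. -/
def QDelta (S : BoolDynSys B L) (H : Set B) (C : B) : Set L := {a : L | S.θ a C ∉ H}

/-- `[A]` is regular in `B/H`. -/
def QRegular (S : BoolDynSys B L) (H : Set B) (A : B) : Prop :=
  ∀ C : B, C ∉ H → qle H C A → (QDelta S H C).Finite ∧ (QDelta S H C).Nonempty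

/-- `(α, [A])` is a cycle in the quotient `(B/H, L, θ)`. -/
def QCycle (S : BoolDynSys B L) (H : Set B) (α : List L) (A : B) : Prop :=
  α ≠ [] ∧ A ∉ H ∧ ∀ C : B, qle H C A → relI H (wordAct S.θ α C) C

/-- The cycle `(α, [A])` has an exit in the quotient `(B/H, L, θ)`. -/
def QHasExit (S : BoolDynSys B L) (H : Set B) (α : List L) (A : B) : Prop :=
  ∃ t : ℕ, ∃ _h1 : 1 ≤ t, ∃ h2 : t ≤ α.length, ∃ C : B, C ∉ H ∧
    qle H C (wordAct S.θ (α.take t) A) ∧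
    QDelta S H C ≠ {α.get ⟨t % α.length, Nat.mod_lt t (Nat.lt_of_lt_of_le _h1 h2)⟩}

/-- The quotient `(B/H, L, θ)` satisfies Condition (L). -/
def QConditionL (S : BoolDynSys B L) (H : Set B) : Prop :=
  ∀ (α : List L) (A : B), QCycle S H α A → QHasExit S H α A

end BDS


section NoIntersectionHelpers
variable {B L : Type*} [GeneralizedBooleanAlgebra B]

lemma wordAct_cons' (θ : L → B → B) (a : L) (l : List L) (X : B) :
    wordAct θ (a :: l) X = wordAct θ l (θ a X) := rfl

lemma wordAct_append' (θ : L → B → B) (l₁ l₂ : List L) (X : B) :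
    wordAct θ (l₁ ++ l₂) X = wordAct θ l₂ (wordAct θ l₁ X) :=
  List.foldl_append

lemma theta_mono (S : BoolDynSys B L) (a : L) : Monotone (S.θ a) := by
  intro x y h
  have h2 := S.map_inf a x y
  rw [inf_eq_left.mpr h] at h2
  rw [h2]
  exact inf_le_right

lemma wordAct_mono (S : BoolDynSys B L) (l : List L) : Monotone (wordAct S.θ l) := by
  induction l with
  | nil => exact fun x y h => h
  | cons a l ih => intro x y h; exact ih (theta_mono S a h)

lemma wordAct_bot (S : BoolDynSys B L) (l : List L) : wordAct S.θ l ⊥ = ⊥ := by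
  induction l with
  | nil => rfl
  | cons a l ih => rw [wordAct_cons', S.map_bot]; exact ih

lemma bds_dichotomy (σ : B → B) (hm : Monotone σ) (N : ℕ) (A : B)
    (hfix : ∀ X ≤ A, σ^[N] X = X) (hN : 1 ≤ N) (W : B) (hWA : W ≤ A) (j : ℕ)
    (h : ∀ Y : B, Y ≠ ⊥ → Y ≤ W → Y ⊓ σ^[j] Y ≠ ⊥) :
    ∀ Y ≤ W, σ^[j] Y = Y := by
  have hmj : Monotone σ^[j] := hm.iterate j
  have step1 : ∀ Y ≤ W, Y ≤ σ^[j] Y := by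
    intro Y hY
    by_contra hcon
    have hZ : Y \ σ^[j] Y ≠ ⊥ := fun hz => hcon (sdiff_eq_bot_iff.mp hz)
    apply h _ hZ (sdiff_le.trans hY)
    have h1 : (Y \ σ^[j] Y) ⊓ σ^[j] (Y \ σ^[j] Y) ≤ (Y \ σ^[j] Y) ⊓ σ^[j] Y :=
      inf_le_inf le_rfl (hmj sdiff_le)
    have h2 : (Y \ σ^[j] Y) ⊓ σ^[j] Y = ⊥ := disjoint_sdiff_self_left.eq_bot
    exact le_bot_iff.mp (h1.trans_eq h2)
  intro Y hY
  have hle := step1 Y hY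
  have hiter : ∀ m, (σ^[N])^[m] Y = Y := by
    intro m
    induction m with
    | zero => rfl
    | succ m ih => rw [Function.iterate_succ_apply, hfix Y (hY.trans hWA), ih]
  have hNfix : (σ^[j])^[N] Y = Y := by
    have he : (σ^[j])^[N] Y = (σ^[N])^[j] Y := by
      rw [← Function.iterate_mul, ← Function.iterate_mul, Nat.mul_comm]
    rw [he, hiter j]
  have hchain : Monotone fun t => (σ^[j])^[t] Y := by
    apply monotone_nat_of_le_succ
    intro t
    rw [Function.iterate_succ_apply]
    exact (hmj.iterate t) hle
  have hge : σ^[j] Y ≤ Y := by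
    have h1 : (σ^[j])^[1] Y ≤ (σ^[j])^[N] Y := hchain hN
    rwa [Function.iterate_one, hNfix] at h1
  exact le_antisymm hge hle

lemma bds_abstract (σ : B → B) (hm : Monotone σ) :
    ∀ N, 1 ≤ N → ∀ A : B, A ≠ ⊥ → (∀ X ≤ A, σ^[N] X = X) →
    ∃ r, 1 ≤ r ∧ r ≤ N ∧ ∃ U : B, U ≠ ⊥ ∧ U ≤ A ∧ (∀ X ≤ U, σ^[r] X = X) ∧
      ∀ i, 1 ≤ i → i < r → U ⊓ σ^[i] U = ⊥ := by
  intro N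
  induction N using Nat.strong_induction_on with
  | _ N IH =>
  intro hN A hA hfix
  by_cases hcase : ∃ i, 1 ≤ i ∧ i < N ∧ ∃ W : B, W ≠ ⊥ ∧ W ≤ A ∧ ∀ X ≤ W, σ^[i] X = X
  · obtain ⟨i, hi1, hiN, W, hW, hWA, hfixi⟩ := hcase
    obtain ⟨r, hr1, hri, U, hU, hUW, h1, h2⟩ := IH i hiN hi1 W hW hfixi
    exact ⟨r, hr1, hri.trans hiN.le, U, hU, hUW.trans hWA, h1, h2⟩
  · have key : ∀ t, t < N → ∃ U : B, U ≠ ⊥ ∧ U ≤ A ∧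
        ∀ i, 1 ≤ i → i ≤ t → U ⊓ σ^[i] U = ⊥ := by
      intro t
      induction t with
      | zero => exact fun _ => ⟨A, hA, le_rfl, fun i h1 h0 => absurd (h1.trans h0) (by omega)⟩
      | succ t iht =>
        intro htN
        obtain ⟨U, hU, hUA, hdis⟩ := iht (by omega)
        by_cases hY : ∃ Y : B, Y ≠ ⊥ ∧ Y ≤ U ∧ Y ⊓ σ^[t + 1] Y = ⊥
        · obtain ⟨Y, hY0, hYU, hYd⟩ := hY
          refine ⟨Y, hY0, hYU.trans hUA, fun i h1 h2 => ?_⟩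
          rcases Nat.lt_or_ge i (t + 1) with hlt | hge2
          · have hle : Y ⊓ σ^[i] Y ≤ U ⊓ σ^[i] U := inf_le_inf hYU ((hm.iterate i) hYU)
            exact le_bot_iff.mp (hle.trans_eq (hdis i h1 (by omega)))
          · have hit : i = t + 1 := by omega
            rw [hit]; exact hYd
        · exfalso
          apply hcase
          refine ⟨t + 1, by omega, htN, U, hU, hUA, ?_⟩
          apply bds_dichotomy σ hm N A hfix hN U hUA (t + 1)
          intro Y hY0 hYU hbot
          exact hY ⟨Y, hY0, hYU, hbot⟩
    obtain ⟨U, hU, hUA, hdis⟩ := key (N - 1) (by omega)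
    exact ⟨N, hN, le_rfl, U, hU, hUA, fun X hX => hfix X (hX.trans hUA),
      fun i h1 h2 => hdis i h1 (by omega)⟩

end NoIntersectionHelpers

/-- Let `(α, A)` be a cycle with no exits. Then there exist `1 ≤ j ≤ |α|` and a
non-empty `C ⊆ A` such that, with `β = α₁⋯α_j`, the pair `(β, C)` is a cycle with
no exits and `C ⊓ θ_{β₁⋯β_k}(C) = ∅` for all `1 ≤ k < j`. -/
theorem no_intersection {B L : Type*} [GeneralizedBooleanAlgebra B]
    (S : BoolDynSys B L) (α : List L) (A : B)
    (hc : IsCycle S α A) (hne : NoExits S α A) :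
    ∃ j : ℕ, 1 ≤ j ∧ j ≤ α.length ∧ ∃ C : B, C ≠ ⊥ ∧ C ≤ A ∧
      IsCycle S (α.take j) C ∧ NoExits S (α.take j) C ∧
      ∀ k : ℕ, 1 ≤ k → k < j → C ⊓ wordAct S.θ ((α.take j).take k) C = ⊥ := by
  classical
  obtain ⟨hαne, hA, hcyc⟩ := hc
  have hn : 0 < α.length := List.length_pos_iff.mpr hαne
  set f : ℕ → L := fun s => α.get ⟨s % α.length, Nat.mod_lt s hn⟩ with hf_def
  have hfval : ∀ (x : ℕ) (h : x < α.length), f x = α.get ⟨x, h⟩ := by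
    intro x h
    simp only [hf_def]
    exact congrArg α.get (Fin.ext (Nat.mod_eq_of_lt h))
  set E : ℕ → B := fun s => wordAct S.θ ((List.range s).map f) A with hE_def
  have hpre : ∀ t, t ≤ α.length → (List.range t).map f = α.take t := by
    intro t ht
    apply List.ext_getElem
    · simp [List.length_take, Nat.min_eq_left ht]
    · intro i h1 h2
      rw [List.length_map, List.length_range] at h1
      simp only [List.getElem_map, List.getElem_range, List.getElem_take]
      rw [hfval i (lt_of_lt_of_le h1 ht), List.get_eq_getElem]
  have hE0 : E 0 = A := by rw [hE_def]; simp [wordAct]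
  have hEsucc : ∀ s, E (s + 1) = S.θ (f s) (E s) := by
    intro s
    simp only [hE_def, List.range_succ, List.map_append, List.map_cons, List.map_nil,
      wordAct_append']
    rfl
  have hcycA : wordAct S.θ α A = A := hcyc A le_rfl
  have hEperiod : ∀ s, E (α.length + s) = E s := by
    intro s
    simp only [hE_def, List.range_add, List.map_append, List.map_map, wordAct_append']
    rw [hpre α.length le_rfl, List.take_length, hcycA]
    have hmc : (List.range s).map (f ∘ fun x => α.length + x) = (List.range s).map f := by
      apply List.map_congr_left
      intro x _
      show f (α.length + x) = f x
      simp only [hf_def]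
      exact congrArg α.get (Fin.ext (Nat.add_mod_left _ _))
    rw [hmc]
  have hEmod : ∀ s, E s = E (s % α.length) := by
    intro s
    induction s using Nat.strong_induction_on with
    | _ s IH =>
    rcases Nat.lt_or_ge s α.length with h | h
    · rw [Nat.mod_eq_of_lt h]
    · obtain ⟨u, rfl⟩ : ∃ u, s = α.length + u := ⟨s - α.length, by omega⟩
      rw [hEperiod u, Nat.add_mod_left]
      exact IH u (by omega)
  have hEtake : ∀ t, t ≤ α.length → E t = wordAct S.θ (α.take t) A := by
    intro t ht
    simp only [hE_def]
    rw [hpre t ht]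
  have hK : ∀ s (X : B), X ≠ ⊥ → X ≤ E s → RegularElt S X ∧ DeltaSet S X = {f s} := by
    intro s X hX0 hXle
    rw [hEmod s] at hXle
    by_cases h0 : s % α.length = 0
    · rw [h0, hE0] at hXle
      have hXle' : X ≤ wordAct S.θ (α.take α.length) A := by
        rw [List.take_length, hcycA]; exact hXle
      obtain ⟨hreg, hdel⟩ := hne α.length hn le_rfl X hX0 hXle'
      refine ⟨hreg, ?_⟩
      rw [hdel, Set.singleton_eq_singleton_iff]
      simp only [hf_def]
      refine congrArg α.get (Fin.ext ?_)
      show α.length % α.length = s % α.length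
      rw [Nat.mod_self, h0]
    · have hlt : s % α.length < α.length := Nat.mod_lt s hn
      have h1 : 1 ≤ s % α.length := Nat.one_le_iff_ne_zero.mpr h0
      rw [hEtake _ hlt.le] at hXle
      obtain ⟨hreg, hdel⟩ := hne (s % α.length) h1 hlt.le X hX0 hXle
      refine ⟨hreg, ?_⟩
      rw [hdel, Set.singleton_eq_singleton_iff]
      simp only [hf_def]
      exact congrArg α.get (Fin.ext (Nat.mod_eq_of_lt hlt))
  have hDne : ∀ s (X : B), DeltaSet S X = {f s} → S.θ (f s) X ≠ ⊥ := by
    intro s X h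
    have hm : f s ∈ DeltaSet S X := by rw [h]; exact Set.mem_singleton _
    exact hm
  have hJP : ∀ k, k ≤ α.length → A ⊓ wordAct S.θ (α.take k) A ≠ ⊥ →
      ∀ s, f (s + k) = f s := by
    intro k hk hD
    have aux : ∀ u, ∃ X : B, X ≠ ⊥ ∧ X ≤ E u ∧ X ≤ E (u + k) := by
      intro u
      induction u with
      | zero =>
        refine ⟨A ⊓ wordAct S.θ (α.take k) A, hD, ?_, ?_⟩
        · rw [hE0]; exact inf_le_left
        · rw [Nat.zero_add, hEtake k hk]; exact inf_le_right
      | succ u ih =>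
        obtain ⟨X, hX0, hX1, hX2⟩ := ih
        have h1 := hK u X hX0 hX1
        have h2 := hK (u + k) X hX0 hX2
        have heq : f u = f (u + k) :=
          Set.singleton_eq_singleton_iff.mp (h1.2.symm.trans h2.2)
        refine ⟨S.θ (f u) X, hDne u X h1.2, ?_, ?_⟩
        · rw [hEsucc u]; exact theta_mono S _ hX1
        · rw [show u + 1 + k = (u + k) + 1 by omega, hEsucc (u + k), heq]
          exact theta_mono S _ hX2
    intro s
    obtain ⟨X, hX0, hX1, hX2⟩ := aux s
    have h1 := (hK s X hX0 hX1).2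
    have h2 := (hK (s + k) X hX0 hX2).2
    exact Set.singleton_eq_singleton_iff.mp (h2.symm.trans h1)
  have hpern : ∀ s, f (s + α.length) = f s := by
    intro s
    simp only [hf_def]
    exact congrArg α.get (Fin.ext (Nat.add_mod_right s α.length))
  have hex : ∃ k, 0 < k ∧ ∀ s, f (s + k) = f s := ⟨α.length, hn, hpern⟩
  have hspec := Nat.find_spec hex
  have hdmin : ∀ m, m < Nat.find hex → ¬(0 < m ∧ ∀ s, f (s + m) = f s) :=
    fun m h => Nat.find_min hex h
  set d := Nat.find hex with hd_def
  obtain ⟨hd0, hdper⟩ := hspec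
  have hmulper : ∀ m s, f (s + d * m) = f s := by
    intro m
    induction m with
    | zero => intro s; simp
    | succ m ih =>
      intro s
      have he : s + d * (m + 1) = (s + d * m) + d := by ring
      rw [he, hdper (s + d * m), ih s]
  have hdvd : ∀ k, (∀ s, f (s + k) = f s) → d ∣ k := by
    intro k hk
    have hrem : ∀ s, f (s + k % d) = f s := by
      intro s
      have h1 : s + k % d + d * (k / d) = s + k := by
        rw [Nat.add_assoc, Nat.mod_add_div]
      calc f (s + k % d) = f (s + k % d + d * (k / d)) := (hmulper _ _).symm
        _ = f (s + k) := by rw [h1]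
        _ = f s := hk s
    rcases Nat.eq_zero_or_pos (k % d) with h | h
    · exact Nat.dvd_of_mod_eq_zero h
    · exact absurd ⟨h, hrem⟩ (hdmin _ (Nat.mod_lt k hd0))
  have hdn : d ∣ α.length := hdvd _ hpern
  have hchunk : ∀ s, d ∣ s → s + d ≤ α.length → α.take (s + d) = α.take s ++ α.take d := by
    intro s hds hsd
    rw [List.take_add]
    congr 1
    apply List.ext_getElem
    · rw [List.length_take, List.length_take, List.length_drop,
        Nat.min_eq_left (by omega), Nat.min_eq_left (by omega)]
    · intro i h1 h2
      rw [List.length_take] at h1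
      have hid : i < d := lt_of_lt_of_le h1 (min_le_left _ _)
      have hsi : s + i < α.length := by omega
      have hi : i < α.length := by omega
      rw [List.getElem_take, List.getElem_drop, List.getElem_take]
      obtain ⟨m, hm⟩ := hds
      have e1 : f (s + i) = f i := by
        rw [hm, Nat.add_comm (d * m) i]
        exact hmulper m i
      rw [hfval (s + i) hsi, hfval i hi, List.get_eq_getElem, List.get_eq_getElem] at e1
      exact e1
  have hchunks : ∀ r, r * d ≤ α.length → ∀ X : B,
      wordAct S.θ (α.take (r * d)) X = (wordAct S.θ (α.take d))^[r] X := by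
    intro r
    induction r with
    | zero => intro _ X; rw [Nat.zero_mul, List.take_zero]; rfl
    | succ r ih =>
      intro hrd X
      rw [Nat.succ_mul] at hrd ⊢
      rw [hchunk (r * d) ⟨r, Nat.mul_comm r d⟩ hrd, wordAct_append',
        ih (Nat.le_trans (Nat.le_add_right _ _) hrd) X, Function.iterate_succ_apply']
  set N := α.length / d with hN_def
  have hNd : N * d = α.length := Nat.div_mul_cancel hdn
  have hN1 : 1 ≤ N := by
    rcases Nat.eq_zero_or_pos N with h | h
    · rw [h, Nat.zero_mul] at hNd; omega
    · exact h
  have hfixN : ∀ X ≤ A, (wordAct S.θ (α.take d))^[N] X = X := by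
    intro X hX
    rw [← hchunks N hNd.le X, hNd, List.take_length]
    exact hcyc X hX
  obtain ⟨r, hr1, hrN, U, hU0, hUA, hfixU, hdisj⟩ :=
    bds_abstract (wordAct S.θ (α.take d)) (wordAct_mono S _) N hN1 A hA hfixN
  have hjn : r * d ≤ α.length := by
    calc r * d ≤ N * d := Nat.mul_le_mul hrN (le_refl d)
      _ = α.length := hNd
  have hj1 : 1 ≤ r * d := Nat.mul_pos hr1 hd0
  have htlen : (α.take (r * d)).length = r * d := by
    rw [List.length_take]; exact Nat.min_eq_left hjn
  have hgetTake : ∀ (m : ℕ) (h : m < (α.take (r * d)).length),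
      (α.take (r * d)).get ⟨m, h⟩ = f m := by
    intro m h
    have hm : m < r * d := by rwa [htlen] at h
    rw [hfval m (lt_of_lt_of_le hm hjn)]
    simp only [List.get_eq_getElem, List.getElem_take]
  refine ⟨r * d, hj1, hjn, U, hU0, hUA, ?_, ?_, ?_⟩
  · refine ⟨List.ne_nil_of_length_pos (by rw [htlen]; omega), hU0, ?_⟩
    intro X hX
    rw [hchunks r hjn X]
    exact hfixU X hX
  · intro t ht1 ht2 X hX0 hXle
    rw [htlen] at ht2
    have htn : t ≤ α.length := ht2.trans hjn
    have hXle' : X ≤ E t := by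
      rw [hEtake t htn]
      have htk : (α.take (r * d)).take t = α.take t := by
        rw [List.take_take, Nat.min_eq_left ht2]
      rw [htk] at hXle
      exact hXle.trans (wordAct_mono S _ hUA)
    obtain ⟨hreg, hdel⟩ := hK t X hX0 hXle'
    refine ⟨hreg, ?_⟩
    rw [hdel, Set.singleton_eq_singleton_iff, hgetTake, htlen]
    rcases Nat.lt_or_ge t (r * d) with hlt | hge
    · rw [Nat.mod_eq_of_lt hlt]
    · have het : t = r * d := le_antisymm ht2 hge
      subst het
      rw [Nat.mod_self]
      have h1 : f (r * d) = f 0 := by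
        have h2 := hmulper r 0
        rw [Nat.zero_add, Nat.mul_comm d r] at h2
        exact h2
      rw [h1]
  · intro k hk1 hkj
    have hkn : k ≤ α.length := le_trans hkj.le hjn
    have htk : (α.take (r * d)).take k = α.take k := by
      rw [List.take_take, Nat.min_eq_left hkj.le]
    rw [htk]
    by_cases hdk : d ∣ k
    · obtain ⟨s, hs⟩ := hdk
      have hs0 : s ≠ 0 := by
        rintro rfl
        rw [Nat.mul_zero] at hs
        omega
      have hsd : s * d = k := by rw [Nat.mul_comm]; exact hs.symm
      have hsr : s < r := by
        by_contra hge
        push_neg at hge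
        have h3 : r * d ≤ s * d := Nat.mul_le_mul hge (le_refl d)
        rw [hsd] at h3
        exact absurd hkj (not_lt.mpr h3)
      have hwa : wordAct S.θ (α.take k) U = (wordAct S.θ (α.take d))^[s] U := by
        rw [← hsd]
        exact hchunks s (by rw [hsd]; exact hkn) U
      rw [hwa]
      exact hdisj s (Nat.one_le_iff_ne_zero.mpr hs0) hsr
    · have hbot : A ⊓ wordAct S.θ (α.take k) A = ⊥ := by
        by_contra hne'
        exact hdk (hdvd k (hJP k hkn hne'))
      have hle : U ⊓ wordAct S.θ (α.take k) U ≤ A ⊓ wordAct S.θ (α.take k) A :=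
        inf_le_inf hUA (wordAct_mono S _ hUA)
      exact le_bot_iff.mp (hle.trans_eq hbot)
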